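/- Let h and, for each ε > 0, χ_ε be holomorphic functions on an open disk D(z_0, r_0) ⊂ ℂ, with sup_{z ∈ D(z_0,r_0)} |χ_ε(z)| → 0 as ε → 0. Set h_ε = h + χ_ε. Let z_{0,ε} = z_0 + δ_ε with δ_ε → 0. Then there exist ε_0 > 0 and 0 < r < r_0 such that for each 0 < ε ≤ ε_0, z_{0,ε} ∈ D(z_0, r) and the equation z − z_{0,ε} − ε·h_ε(z) = 0 has a unique solution z_ε in D(z_0, r), and moreover z_ε = z_{0,ε} + ε·h(z_0) + o(ε) as ε → 0. -/

import Mathlib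

open Filter Topology Metric Set
open scoped NNReal

lemma lipAux {f : ℂ → ℂ} {s : Set ℂ} (hs : Convex ℝ s) {C : ℝ}
    (hf : ∀ x ∈ s, DifferentiableAt ℂ f x)
    (hC : ∀ x ∈ s, ‖deriv f x‖ ≤ C) :
    ∀ x ∈ s, ∀ y ∈ s, ‖f y - f x‖ ≤ C * ‖y - x‖ := by
  intro x hx y hy
  refine hs.norm_image_sub_le_of_norm_fderiv_le hf (fun z hz => ?_) hx hy
  rw [(hf z hz).hasDerivAt.hasFDerivAt.fderiv]
  calc ‖ContinuousLinearMap.smulRight (1 : ℂ →L[ℂ] ℂ) (deriv f z)‖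
      = ‖(1 : ℂ →L[ℂ] ℂ)‖ * ‖deriv f z‖ := ContinuousLinearMap.norm_smulRight_apply _ _
    _ ≤ C := by simpa [ContinuousLinearMap.norm_id] using hC z hz

lemma fixAux {f : ℂ → ℂ} {s : Set ℂ} (hsc : IsComplete s) (hsf : Set.MapsTo f s s)
    (hlip : ∀ x ∈ s, ∀ y ∈ s, dist (f x) (f y) ≤ (1/2 : ℝ) * dist x y)
    {x : ℂ} (hx : x ∈ s) : ∃ y ∈ s, f y = y := by
  have hK : ContractingWith (1/2 : ℝ≥0) (hsf.restrict f s s) := by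
    constructor
    · exact by norm_num [← NNReal.coe_lt_coe]
    · exact (Set.MapsTo.lipschitzOnWith_iff_restrict hsf).1 (LipschitzOnWith.of_dist_le_mul (by
        intro a ha b hb; simpa using hlip a ha b hb))
  obtain ⟨y, hys, hfy, -⟩ := hK.exists_fixedPoint' hsc hsf hx (edist_ne_top _ _)
  exact ⟨y, hys, hfy⟩

/-- Holomorphic perturbation lemma: if h_ε = h + χ_ε with h, χ_ε holomorphic on
D(z₀, r₀), sup_{D(z₀,r₀)}|χ_ε| → 0 as ε → 0⁺, and z_{0,ε} = z₀ + δ_ε with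
δ_ε → 0, then there are ε₀ > 0 and 0 < r < r₀ such that for 0 < ε ≤ ε₀ the
equation z − z_{0,ε} − ε·h_ε(z) = 0 has a unique solution z_ε in D(z₀, r),
and z_ε = z_{0,ε} + ε·h(z₀) + o(ε). -/
theorem stmt_5 (z₀ : ℂ) (r₀ : ℝ) (hr₀ : 0 < r₀)
    (h : ℂ → ℂ) (χ : ℝ → ℂ → ℂ) (δ : ℝ → ℂ)
    (hh : DifferentiableOn ℂ h (ball z₀ r₀))
    (hχdiff : ∀ ε : ℝ, 0 < ε → DifferentiableOn ℂ (χ ε) (ball z₀ r₀))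
    (hχsup : ∀ η : ℝ, 0 < η → ∃ ε₁ : ℝ, 0 < ε₁ ∧
      ∀ ε : ℝ, 0 < ε → ε ≤ ε₁ → ∀ z ∈ ball z₀ r₀, ‖χ ε z‖ ≤ η)
    (hδ : Tendsto δ (𝓝[>] (0 : ℝ)) (𝓝 0)) :
    ∃ ε₀ : ℝ, 0 < ε₀ ∧ ∃ r : ℝ, 0 < r ∧ r < r₀ ∧ ∃ Z : ℝ → ℂ,
      (∀ ε : ℝ, 0 < ε → ε ≤ ε₀ →
        z₀ + δ ε ∈ ball z₀ r ∧
        Z ε ∈ ball z₀ r ∧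
        Z ε - (z₀ + δ ε) - (ε : ℂ) * (h (Z ε) + χ ε (Z ε)) = 0 ∧
        ∀ z ∈ ball z₀ r,
          z - (z₀ + δ ε) - (ε : ℂ) * (h z + χ ε z) = 0 → z = Z ε) ∧
      Tendsto (fun ε : ℝ => (Z ε - (z₀ + δ ε) - (ε : ℂ) * h z₀) / (ε : ℂ))
        (𝓝[>] (0 : ℝ)) (𝓝 0) := by
  set r : ℝ := r₀ / 2 with hr_def
  have hrpos : 0 < r := by positivity
  have hrlt : r < r₀ := by rw [hr_def]; linarith
  set s : Set ℂ := closedBall z₀ r with hs_def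
  have hsub : s ⊆ ball z₀ r₀ := closedBall_subset_ball hrlt
  have hz₀s : z₀ ∈ s := mem_closedBall_self hrpos.le
  have hsconv : Convex ℝ s := convex_closedBall _ _
  -- bound for h
  obtain ⟨M₀, hM₀⟩ := (isCompact_closedBall z₀ r).exists_bound_of_continuousOn
    (hh.continuousOn.mono hsub)
  set M : ℝ := max M₀ 0 with hM_def
  have hM : ∀ z ∈ s, ‖h z‖ ≤ M := fun z hz => (hM₀ z hz).trans (le_max_left _ _)
  have hM0 : 0 ≤ M := le_max_right _ _
  -- bound for deriv h
  have han : AnalyticOnNhd ℂ h (ball z₀ r₀) := hh.analyticOnNhd isOpen_ball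
  obtain ⟨L₀, hL₀⟩ := (isCompact_closedBall z₀ r).exists_bound_of_continuousOn
    ((han.deriv.continuousOn).mono hsub)
  set L : ℝ := max L₀ 0 with hL_def
  have hL0 : 0 ≤ L := le_max_right _ _
  have hdiffh : ∀ x ∈ s, DifferentiableAt ℂ h x := fun x hx =>
    hh.differentiableAt (isOpen_ball.mem_nhds (hsub hx))
  have hLip : ∀ x ∈ s, ∀ y ∈ s, ‖h y - h x‖ ≤ L * ‖y - x‖ :=
    lipAux hsconv hdiffh (fun x hx => (hL₀ x hx).trans (le_max_left _ _))
  -- χ sup bound with η = r₀ / 24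
  set η : ℝ := r₀ / 24 with hη_def
  have hηpos : 0 < η := by positivity
  obtain ⟨ε₁, hε₁pos, hε₁⟩ := hχsup η hηpos
  -- χ Lipschitz 1/4 bound on s for 0 < ε ≤ ε₁
  have hχLip : ∀ ε : ℝ, 0 < ε → ε ≤ ε₁ →
      ∀ x ∈ s, ∀ y ∈ s, ‖χ ε y - χ ε x‖ ≤ (1/4 : ℝ) * ‖y - x‖ := by
    intro ε hε hεle
    refine lipAux hsconv (fun x hx => (hχdiff ε hε).differentiableAt
      (isOpen_ball.mem_nhds (hsub hx))) (fun w hw => ?_)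
    have hball : ball w (r₀ / 2) ⊆ ball z₀ r₀ := by
      intro z hz
      have h1 : dist z w < r₀ / 2 := mem_ball.1 hz
      have h2 : dist w z₀ ≤ r := mem_closedBall.1 hw
      have := dist_triangle z w z₀
      rw [mem_ball]
      rw [hr_def] at h2
      linarith
    have hd : DifferentiableOn ℂ (χ ε) (ball w (r₀ / 2)) := (hχdiff ε hε).mono hball
    have hmaps : MapsTo (χ ε) (ball w (r₀ / 2)) (ball (χ ε w) (3 * η)) := by
      intro z hz
      rw [mem_ball, dist_eq_norm]
      calc ‖χ ε z - χ ε w‖ ≤ ‖χ ε z‖ + ‖χ ε w‖ := norm_sub_le _ _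
        _ ≤ η + η := add_le_add (hε₁ ε hε hεle z (hball hz))
              (hε₁ ε hε hεle w (hsub hw))
        _ < 3 * η := by linarith
    have := Complex.norm_deriv_le_div_of_mapsTo_ball hd (hmaps.mono_right ball_subset_closedBall) (by positivity : (0:ℝ) < r₀/2)
    calc ‖deriv (χ ε) w‖ ≤ 3 * η / (r₀ / 2) := this
      _ = 1/4 := by rw [hη_def]; field_simp; ring
  -- δ bound
  have hδev : ∀ᶠ ε in 𝓝[>] (0:ℝ), ‖δ ε‖ < r / 4 :=
    (hδ.eventually (Metric.ball_mem_nhds (0:ℂ) (by positivity : (0:ℝ) < r/4))).mono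
      (fun ε hε => by simpa [dist_eq_norm] using hε)
  obtain ⟨ε₂, hε₂mem, hε₂⟩ := mem_nhdsGT_iff_exists_Ioc_subset.1 hδev
  have hε₂pos : 0 < ε₂ := hε₂mem
  -- the map
  set F : ℝ → ℂ → ℂ := fun ε z => z₀ + δ ε + (ε:ℂ) * (h z + χ ε z) with hF_def
  set ε₀ : ℝ := min (min ε₁ ε₂) (min (r / (4 * (M + η))) (1 / (2 * (L + 1)))) with hε₀_def
  have hε₀pos : 0 < ε₀ := by
    refine lt_min (lt_min hε₁pos hε₂pos) (lt_min ?_ ?_) <;> positivity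
  -- basic estimates for good ε
  have hgood : ∀ ε : ℝ, 0 < ε → ε ≤ ε₀ →
      (∀ z ∈ s, ‖F ε z - z₀‖ ≤ ‖δ ε‖ + ε * (M + η)) ∧
      (∀ x ∈ s, ∀ y ∈ s, dist (F ε x) (F ε y) ≤ (1/2 : ℝ) * dist x y) ∧
      ‖δ ε‖ < r / 4 ∧ ε * (M + η) ≤ r / 4 := by
    intro ε hε hεle
    have hεle₁ : ε ≤ ε₁ := hεle.trans ((min_le_left _ _).trans (min_le_left _ _))
    have hεle₂ : ε ≤ ε₂ := hεle.trans ((min_le_left _ _).trans (min_le_right _ _))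
    have hεle₃ : ε ≤ r / (4 * (M + η)) := hεle.trans ((min_le_right _ _).trans (min_le_left _ _))
    have hεle₄ : ε ≤ 1 / (2 * (L + 1)) := hεle.trans ((min_le_right _ _).trans (min_le_right _ _))
    have hεnorm : ‖(ε:ℂ)‖ = ε := by
      rw [Complex.norm_real, Real.norm_eq_abs, abs_of_pos hε]
    refine ⟨?_, ?_, hε₂ ⟨hε, hεle₂⟩, ?_⟩
    · intro z hz
      have : F ε z - z₀ = δ ε + (ε:ℂ) * (h z + χ ε z) := by rw [hF_def]; ring
      rw [this]
      calc ‖δ ε + (ε:ℂ) * (h z + χ ε z)‖ ≤ ‖δ ε‖ + ‖(ε:ℂ) * (h z + χ ε z)‖ := norm_add_le _ _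
        _ ≤ ‖δ ε‖ + ε * (M + η) := by
            rw [norm_mul, hεnorm]
            gcongr
            calc ‖h z + χ ε z‖ ≤ ‖h z‖ + ‖χ ε z‖ := norm_add_le _ _
              _ ≤ M + η := add_le_add (hM z hz) (hε₁ ε hε hεle₁ z (hsub hz))
    · intro x hx y hy
      rw [dist_eq_norm]
      have : F ε x - F ε y = (ε:ℂ) * ((h x - h y) + (χ ε x - χ ε y)) := by rw [hF_def]; ring
      rw [this, norm_mul, hεnorm, dist_eq_norm]
      calc ε * ‖(h x - h y) + (χ ε x - χ ε y)‖
          ≤ ε * ((L + 1/4) * ‖x - y‖) := by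
            gcongr
            calc ‖(h x - h y) + (χ ε x - χ ε y)‖ ≤ ‖h x - h y‖ + ‖χ ε x - χ ε y‖ :=
                norm_add_le _ _
              _ ≤ L * ‖x - y‖ + (1/4) * ‖x - y‖ :=
                add_le_add (hLip y hy x hx) (hχLip ε hε hεle₁ y hy x hx)
              _ = (L + 1/4) * ‖x - y‖ := by ring
        _ ≤ (1/2 : ℝ) * ‖x - y‖ := by
            have hxy : (0:ℝ) ≤ ‖x - y‖ := norm_nonneg _
            have h1 : ε * (L + 1/4) ≤ 1/2 := by
              have h2 : ε * (2 * (L+1)) ≤ 1 := by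
                rw [div_eq_mul_inv, one_mul] at hεle₄
                calc ε * (2*(L+1)) ≤ (2*(L+1))⁻¹ * (2*(L+1)) := by
                      have : (0:ℝ) < 2*(L+1) := by linarith
                      gcongr
                  _ = 1 := by field_simp
              nlinarith
            nlinarith
    · have hMη : (0:ℝ) < M + η := by linarith
      calc ε * (M + η) ≤ (r / (4 * (M + η))) * (M + η) := by gcongr
        _ = r / 4 := by field_simp
  -- define Z
  classical
  set Z : ℝ → ℂ := fun ε => if hc : ∃ y ∈ s, F ε y = y then hc.choose else z₀ with hZ_def
  have hZspec : ∀ ε : ℝ, 0 < ε → ε ≤ ε₀ → Z ε ∈ s ∧ F ε (Z ε) = Z ε := by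
    intro ε hε hεle
    obtain ⟨hb, hc, hδb, hεb⟩ := hgood ε hε hεle
    have hmaps : MapsTo (F ε) s s := by
      intro z hz
      rw [hs_def, mem_closedBall, dist_eq_norm]
      calc ‖F ε z - z₀‖ ≤ ‖δ ε‖ + ε * (M + η) := hb z hz
        _ ≤ r / 4 + r / 4 := add_le_add hδb.le hεb
        _ ≤ r := by linarith
    have hex : ∃ y ∈ s, F ε y = y :=
      fixAux Metric.isClosed_closedBall.isComplete hmaps hc hz₀s
    rw [hZ_def]
    simp only [dif_pos hex]
    exact hex.choose_spec
  refine ⟨ε₀, hε₀pos, r, hrpos, hrlt, Z, ?_, ?_⟩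
  · intro ε hε hεle
    obtain ⟨hb, hc, hδb, hεb⟩ := hgood ε hε hεle
    obtain ⟨hZs, hZfix⟩ := hZspec ε hε hεle
    have hZnorm : ‖Z ε - z₀‖ ≤ r / 2 := by
      calc ‖Z ε - z₀‖ = ‖F ε (Z ε) - z₀‖ := by rw [hZfix]
        _ ≤ ‖δ ε‖ + ε * (M + η) := hb _ hZs
        _ ≤ r / 4 + r / 4 := add_le_add hδb.le hεb
        _ = r / 2 := by ring
    refine ⟨?_, ?_, ?_, ?_⟩
    · rw [mem_ball, dist_eq_norm]
      calc ‖z₀ + δ ε - z₀‖ = ‖δ ε‖ := by congr 1; ring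
        _ < r / 4 := hδb
        _ < r := by linarith
    · rw [mem_ball, dist_eq_norm]
      calc ‖Z ε - z₀‖ ≤ r / 2 := hZnorm
        _ < r := by linarith
    · have h1 := hZfix
      rw [hF_def] at h1
      linear_combination -h1
    · intro z hz heq
      have hzs : z ∈ s := ball_subset_closedBall hz
      have hzfix : F ε z = z := by rw [hF_def]; linear_combination -heq
      have := hc z hzs (Z ε) hZs
      rw [hzfix, hZfix] at this
      have h0 : dist z (Z ε) ≤ 0 := by linarith [dist_nonneg (x := z) (y := Z ε)]
      exact dist_le_zero.1 h0
  · rw [NormedAddCommGroup.tendsto_nhds_zero]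
    intro η' hη'
    obtain ⟨ε₃, hε₃pos, hε₃⟩ := hχsup (η'/2) (by positivity)
    set c : ℝ := η' / (4 * (L + 1) * (M + η + 1)) with hc_def
    have hcpos : 0 < c := by positivity
    have hev1 : Ioc (0:ℝ) (min (min ε₀ ε₃) c) ∈ 𝓝[>] (0:ℝ) :=
      Ioc_mem_nhdsGT_of_mem ⟨le_refl 0, lt_min (lt_min hε₀pos hε₃pos) hcpos⟩
    have hev2 : ∀ᶠ ε in 𝓝[>] (0:ℝ), ‖δ ε‖ < c :=
      (hδ.eventually (Metric.ball_mem_nhds (0:ℂ) hcpos)).mono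
        (fun ε hε => by simpa [dist_eq_norm] using hε)
    filter_upwards [hev1, hev2] with ε hε hδc
    obtain ⟨hεpos, hεle'⟩ := hε
    have hεle : ε ≤ ε₀ := hεle'.trans ((min_le_left _ _).trans (min_le_left _ _))
    have hεle₃ : ε ≤ ε₃ := hεle'.trans ((min_le_left _ _).trans (min_le_right _ _))
    have hεlec : ε ≤ c := hεle'.trans (min_le_right _ _)
    obtain ⟨hb, hcontr, hδb, hεb⟩ := hgood ε hεpos hεle
    obtain ⟨hZs, hZfix⟩ := hZspec ε hεpos hεle
    have hεne : (ε:ℂ) ≠ 0 := by exact_mod_cast hεpos.ne'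
    have heq : Z ε - (z₀ + δ ε) - (ε:ℂ) * (h (Z ε) + χ ε (Z ε)) = 0 := by
      have h1 := hZfix; rw [hF_def] at h1; linear_combination -h1
    have hq : (Z ε - (z₀ + δ ε) - (ε:ℂ) * h z₀) / (ε:ℂ)
        = h (Z ε) + χ ε (Z ε) - h z₀ := by
      field_simp
      linear_combination heq
    rw [hq]
    have hZnorm : ‖Z ε - z₀‖ ≤ ‖δ ε‖ + ε * (M + η) := by
      calc ‖Z ε - z₀‖ = ‖F ε (Z ε) - z₀‖ := by rw [hZfix]
        _ ≤ ‖δ ε‖ + ε * (M + η) := hb _ hZs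
    have hχb : ‖χ ε (Z ε)‖ ≤ η'/2 := hε₃ ε hεpos hεle₃ _ (hsub hZs)
    have hhb : ‖h (Z ε) - h z₀‖ ≤ L * ‖Z ε - z₀‖ := hLip z₀ hz₀s (Z ε) hZs
    calc ‖h (Z ε) + χ ε (Z ε) - h z₀‖
        ≤ ‖h (Z ε) - h z₀‖ + ‖χ ε (Z ε)‖ := by
          have : h (Z ε) + χ ε (Z ε) - h z₀ = (h (Z ε) - h z₀) + χ ε (Z ε) := by ring
          rw [this]; exact norm_add_le _ _
      _ ≤ L * (‖δ ε‖ + ε * (M + η)) + η'/2 :=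
          add_le_add (hhb.trans (mul_le_mul_of_nonneg_left hZnorm hL0)) hχb
      _ < η' := by
          have hA : ‖δ ε‖ + ε * (M + η) ≤ c + c * (M + η) :=
            add_le_add hδc.le (mul_le_mul_of_nonneg_right hεlec (by positivity))
          have hY : (0:ℝ) ≤ c + c * (M + η) := by positivity
          have h1 : L * (‖δ ε‖ + ε * (M + η)) ≤ (L+1) * (c + c * (M + η)) :=
            (mul_le_mul_of_nonneg_left hA hL0).trans
              (mul_le_mul_of_nonneg_right (by linarith) hY)
          have h2 : (L+1) * (c + c * (M + η)) = (L+1) * (M + η + 1) * c := by ring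
          have h3 : (L+1) * (M + η + 1) * c = η' / 4 := by
            rw [hc_def]; field_simp
          linarith
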